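/- arXiv:1805.07909 — 2 statements merged into one kernel-verified Lean document; each statement's English description precedes it below -/
import Mathlib

section
/- Let d ≥ 1, let 𝒳 ⊆ ℝ^d be compact, let f : ℝ^d → ℝ be continuous, and let 0 < β < 1. Suppose M₁ and M₂ are cluster-cores of f, i.e., for i = 1, 2, M_i is a nonempty subset of 𝒳 that equals the connected component containing one of its points of the set {x ∈ 𝒳 : f(x) ≥ (1 − β)·sup_{x' ∈ M_i} f(x')}. If M₁ ≠ M₂, then M₁ ∩ M₂ = ∅. -/
/-- Helper: if two cluster-cores share a point `z` and `sSup (f '' M₂) ≤ sSup (f '' M₁)`,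
then they are equal. -/
lemma clusterCores_eq_of_mem {X : Type*} [TopologicalSpace X]
    (𝒳 : Set X) (f : X → ℝ) (β : ℝ) (hβ1 : β < 1)
    (M₁ M₂ : Set X)
    (hcc₁ : ∃ x ∈ M₁,
      M₁ = connectedComponentIn {y ∈ 𝒳 | (1 - β) * sSup (f '' M₁) ≤ f y} x)
    (hcc₂ : ∃ x ∈ M₂,
      M₂ = connectedComponentIn {y ∈ 𝒳 | (1 - β) * sSup (f '' M₂) ≤ f y} x)
    (hbdd : BddAbove (f '' M₂))
    (hsup : sSup (f '' M₂) ≤ sSup (f '' M₁))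
    (z : X) (hz₁ : z ∈ M₁) (hz₂ : z ∈ M₂) : M₁ = M₂ := by
  obtain ⟨x₁, hx₁, h₁⟩ := hcc₁
  obtain ⟨x₂, hx₂, h₂⟩ := hcc₂
  set S₁ := {y ∈ 𝒳 | (1 - β) * sSup (f '' M₁) ≤ f y} with hS₁
  set S₂ := {y ∈ 𝒳 | (1 - β) * sSup (f '' M₂) ≤ f y} with hS₂
  have hβ' : (0:ℝ) ≤ 1 - β := by linarith
  have hS12 : S₁ ⊆ S₂ := fun y hy =>
    ⟨hy.1, le_trans (mul_le_mul_of_nonneg_left hsup hβ') hy.2⟩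
  have hM₁S₁ : M₁ ⊆ S₁ := h₁ ▸ connectedComponentIn_subset _ _
  -- M₁ is preconnected, contained in S₂, and contains z ∈ M₂,
  -- so M₁ ⊆ connectedComponentIn S₂ z = M₂.
  have hpre : IsPreconnected M₁ := h₁ ▸ (isPreconnected_connectedComponentIn)
  have hcompz₂ : connectedComponentIn S₂ z = M₂ := by
    rw [h₂]; exact (connectedComponentIn_eq (h₂ ▸ hz₂ : z ∈ connectedComponentIn S₂ x₂)).symm
  have hM₁M₂ : M₁ ⊆ M₂ := by
    rw [← hcompz₂]
    exact hpre.subset_connectedComponentIn hz₁ (hM₁S₁.trans hS12)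
  -- hence sups are equal, so S₁ = S₂, so the components coincide.
  have hsup' : sSup (f '' M₁) ≤ sSup (f '' M₂) :=
    csSup_le_csSup hbdd ⟨f z, z, hz₁, rfl⟩ (Set.image_mono hM₁M₂)
  have hsupeq : sSup (f '' M₁) = sSup (f '' M₂) := le_antisymm hsup' hsup
  have hSeq : S₁ = S₂ := by rw [hS₁, hS₂, hsupeq]
  have hcompz₁ : connectedComponentIn S₁ z = M₁ := by
    rw [h₁]; exact (connectedComponentIn_eq (h₁ ▸ hz₁ : z ∈ connectedComponentIn S₁ x₁)).symm
  rw [← hcompz₁, ← hcompz₂, hSeq]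

/-- Distinct cluster-cores of a continuous density `f` on a compact support `𝒳`
are disjoint.  A cluster-core with fluctuation parameter `β ∈ (0,1)` is a nonempty
subset of `𝒳` that equals the connected component, containing one of its points,
of the superlevel set `{x ∈ 𝒳 | f x ≥ (1 - β) * sup_{x' ∈ M} f x'}`. -/
theorem clusterCores_disjoint {d : ℕ} (hd : 1 ≤ d)
    (𝒳 : Set (EuclideanSpace ℝ (Fin d))) (hcomp : IsCompact 𝒳)
    (f : EuclideanSpace ℝ (Fin d) → ℝ) (hf : Continuous f)
    (β : ℝ) (hβ0 : 0 < β) (hβ1 : β < 1)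
    (M₁ M₂ : Set (EuclideanSpace ℝ (Fin d)))
    (hM₁ne : M₁.Nonempty) (hM₂ne : M₂.Nonempty)
    (hM₁X : M₁ ⊆ 𝒳) (hM₂X : M₂ ⊆ 𝒳)
    (hcc₁ : ∃ x ∈ M₁,
      M₁ = connectedComponentIn {y ∈ 𝒳 | (1 - β) * sSup (f '' M₁) ≤ f y} x)
    (hcc₂ : ∃ x ∈ M₂,
      M₂ = connectedComponentIn {y ∈ 𝒳 | (1 - β) * sSup (f '' M₂) ≤ f y} x)
    (hne : M₁ ≠ M₂) :
    M₁ ∩ M₂ = ∅ := by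
  by_contra h
  obtain ⟨z, hz₁, hz₂⟩ := Set.nonempty_iff_ne_empty.mpr h
  have hbddX : BddAbove (f '' 𝒳) := (hcomp.image hf).bddAbove
  have hbdd₁ : BddAbove (f '' M₁) := hbddX.mono (Set.image_mono hM₁X)
  have hbdd₂ : BddAbove (f '' M₂) := hbddX.mono (Set.image_mono hM₂X)
  rcases le_total (sSup (f '' M₂)) (sSup (f '' M₁)) with hle | hle
  · exact hne (clusterCores_eq_of_mem 𝒳 f β hβ1 M₁ M₂ hcc₁ hcc₂ hbdd₂ hle z hz₁ hz₂)
  · exact hne (clusterCores_eq_of_mem 𝒳 f β hβ1 M₂ M₁ hcc₂ hcc₁ hbdd₁ hle z hz₂ hz₁).symm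
end

section
/- Let f : ℝ^d → ℝ be continuous and differentiable, let π : ℝ → ℝ^d be a gradient ascent path of f (i.e., π'(t) = ∇f(π(t)) for all t), let λ ∈ ℝ and t₀ ∈ ℝ, and suppose π(t₀) lies in M, where M is the connected component of the closed superlevel set {x ∈ ℝ^d : f(x) ≥ λ} containing π(t₀). Then π(t) ∈ M for all t ≥ t₀; that is, once a gradient ascent path enters a connected component of a superlevel set, it never leaves it. -/
open Gradient

/-- Once a gradient ascent path of a continuous differentiable function
`f : ℝ^d → ℝ` enters a connected component of the superlevel set
`{x | f x ≥ λ}`, it never leaves it. -/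
theorem gradientFlow_stays_in_connectedComponent_of_superlevel
    {d : ℕ} (hd : 1 ≤ d)
    (f : EuclideanSpace ℝ (Fin d) → ℝ)
    (hfc : Continuous f) (hfd : Differentiable ℝ f)
    (π : ℝ → EuclideanSpace ℝ (Fin d))
    (hπ : ∀ t : ℝ, HasDerivAt π (gradient f (π t)) t)
    (lam : ℝ) (t₀ : ℝ)
    (hmem : π t₀ ∈ connectedComponentIn {x | lam ≤ f x} (π t₀)) :
    ∀ t : ℝ, t₀ ≤ t → π t ∈ connectedComponentIn {x | lam ≤ f x} (π t₀) := by
  -- f ∘ π is monotone since its derivative is ‖∇f‖² ≥ 0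
  have hderiv : ∀ t : ℝ, HasDerivAt (f ∘ π)
      (inner ℝ (gradient f (π t)) (gradient f (π t)) : ℝ) t := by
    intro t
    have hg := ((hfd (π t)).hasGradientAt).hasFDerivAt
    have := hg.comp_hasDerivAt t (hπ t)
    simpa [InnerProductSpace.toDual_apply_apply, -toDual_gradient] using this
  have hmono : Monotone (f ∘ π) := by
    apply monotone_of_deriv_nonneg
    · exact fun t => (hderiv t).differentiableAt
    · intro t
      rw [(hderiv t).deriv]
      exact real_inner_self_nonneg
  have hπcont : Continuous π :=
    continuous_iff_continuousAt.2 fun t => (hπ t).continuousAt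
  have ht₀ : lam ≤ f (π t₀) := connectedComponentIn_subset {x | lam ≤ f x} (π t₀) hmem
  intro t ht
  have hsub : π '' Set.Icc t₀ t ⊆ {x | lam ≤ f x} := by
    rintro _ ⟨s, hs, rfl⟩
    exact le_trans ht₀ (hmono hs.1)
  have hconn : IsPreconnected (π '' Set.Icc t₀ t) :=
    (isPreconnected_Icc).image _ hπcont.continuousOn
  have := hconn.subset_connectedComponentIn
    (⟨t₀, ⟨le_refl _, ht⟩, rfl⟩ : π t₀ ∈ π '' Set.Icc t₀ t) hsub
  exact this ⟨t, ⟨ht, le_refl _⟩, rfl⟩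
end
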